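/- For L = 5 and Q(λ) = λ² + 1/4, there is no polynomial P(λ) ∈ ℂ[λ] satisfying P(λ + i/2)Q(λ - i/2) - P(λ - i/2)Q(λ + i/2) = λ⁵. -/
import Mathlib


open Complex Polynomial

/-- For `L = 5` and `Q(λ) = λ² + 1/4`, no polynomial `P` satisfies the
Wronskian relation `P(λ+i/2)Q(λ-i/2) - P(λ-i/2)Q(λ+i/2) = λ⁵`. -/
theorem no_polynomial_partner_L5 :
    ¬ ∃ P : Polynomial ℂ,
      P.comp (X + C (I / 2)) * (X ^ 2 + C (1 / 4) : Polynomial ℂ).comp (X - C (I / 2)) -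
        P.comp (X - C (I / 2)) * (X ^ 2 + C (1 / 4) : Polynomial ℂ).comp (X + C (I / 2)) =
        X ^ 5 := by
  rintro ⟨P, h⟩
  have h1 := congrArg (eval I) h
  have h2 := congrArg (eval (-I)) h
  have h3 := congrArg (fun p => eval 0 (derivative p)) h
  simp only [eval_sub, eval_mul, eval_comp, eval_add, eval_pow, eval_X, eval_C,
    derivative_sub, derivative_mul, derivative_comp, derivative_add, derivative_X,
    derivative_C, derivative_pow, derivative_X_pow, eval_natCast, eval_one, eval_zero] at h1 h2 h3
  rw [show (0:ℂ) + I/2 = I - I/2 from by ring, show (0:ℂ) - I/2 = -I + I/2 from by ring] at h3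
  have hI : I ^ 2 = -1 := I_sq
  set a := P.eval (I + I / 2) with ha
  set u := P.eval (I - I / 2) with hu
  set v := P.eval (-I + I / 2) with hv
  set d := P.eval (-I - I / 2) with hd
  set up := (derivative P).eval (I - I / 2) with hup
  set vp := (derivative P).eval (-I + I / 2) with hvp
  have : (I : ℂ) = 0 := by
    linear_combination (-1/2 : ℂ) * h1 + (1/2 : ℂ) * h2 + I * h3 +
      ((a + d - u - v)/8 - I*up/4 + I*vp/4 - I*(I^2 - 1)) * hI
  exact I_ne_zero this
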